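/- (Causal state reduction.) Let (A_i, B_i, C_i, D_i) with state sizes (n_i) be a recurrent realization of the causal operator T, and let 𝒞_i be its controllability matrices. Then there exists a recurrent realization of T whose state sizes are n_i' = rank(𝒞_i) for every 1 ≤ i ≤ ℓ−1 (with n_0' = n_ℓ' = 0). -/

import Mathlib

open Matrix

/-- `stProd n A i j` is the state-transition product `A (i-1) * A (i-2) * ⋯ * A j`
(mapping `ℝ^{n j}` to `ℝ^{n i}`), with the empty product (`i = j`) equal to the identity. -/
noncomputable def stProd (n : ℕ → ℕ) (A : ∀ i : ℕ, Matrix (Fin (n (i + 1))) (Fin (n i)) ℝ) :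
    (i j : ℕ) → Matrix (Fin (n i)) (Fin (n j)) ℝ
  | 0, j =>
      if h : (0 : ℕ) = j then
        (1 : Matrix (Fin (n 0)) (Fin (n 0)) ℝ).submatrix id (Fin.cast (congrArg n h.symm))
      else 0
  | i + 1, j =>
      if h : i + 1 = j then
        (1 : Matrix (Fin (n (i + 1))) (Fin (n (i + 1))) ℝ).submatrix id
          (Fin.cast (congrArg n h.symm))
      else A i * stProd n A i j

/-- `T` is a causal operator: its `d × d` blocks `T i j` vanish above the block diagonal. -/
def IsCausal (d ℓ : ℕ) (T : ℕ → ℕ → Matrix (Fin d) (Fin d) ℝ) : Prop :=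
  ∀ i j, i < ℓ → j < ℓ → i < j → T i j = 0

/-- `(A, B, C, D)` with state sizes `n` is a recurrent realization of the causal operator `T`:
`T i i = D i` and `T i j = C i * (A (i-1) * ⋯ * A (j+1)) * B j` for `i > j`. -/
def IsRealization (d ℓ : ℕ) (T : ℕ → ℕ → Matrix (Fin d) (Fin d) ℝ) (n : ℕ → ℕ)
    (A : ∀ i : ℕ, Matrix (Fin (n (i + 1))) (Fin (n i)) ℝ)
    (B : ∀ i : ℕ, Matrix (Fin (n (i + 1))) (Fin d) ℝ)
    (C : ∀ i : ℕ, Matrix (Fin d) (Fin (n i)) ℝ)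
    (D : ℕ → Matrix (Fin d) (Fin d) ℝ) : Prop :=
  (∀ i, i < ℓ → T i i = D i) ∧
  ∀ i j, i < ℓ → j < i → T i j = C i * stProd n A i (j + 1) * B j

/-- The operator submatrix `H_i = T_{i:,:i-1}`, with rows indexed by block row `i + k`
(`k < ℓ - i`) and columns by block column `j < i`. -/
def Hmat (d ℓ : ℕ) (T : ℕ → ℕ → Matrix (Fin d) (Fin d) ℝ) (i : ℕ) :
    Matrix (Fin (ℓ - i) × Fin d) (Fin i × Fin d) ℝ :=
  fun p q => T (i + (p.1 : ℕ)) (q.1 : ℕ) p.2 q.2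

/-- The observability matrix at index `i`, with block rows `C (i+k) * A (i+k-1) * ⋯ * A i`. -/
noncomputable def Obs (d ℓ : ℕ) (n : ℕ → ℕ)
    (A : ∀ i : ℕ, Matrix (Fin (n (i + 1))) (Fin (n i)) ℝ)
    (C : ∀ i : ℕ, Matrix (Fin d) (Fin (n i)) ℝ) (i : ℕ) :
    Matrix (Fin (ℓ - i) × Fin d) (Fin (n i)) ℝ :=
  fun p s => (C (i + (p.1 : ℕ)) * stProd n A (i + (p.1 : ℕ)) i) p.2 s

/-- The controllability matrix at index `i`, with block columns `A (i-1) * ⋯ * A (j+1) * B j`. -/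
noncomputable def Ctrb (d : ℕ) (n : ℕ → ℕ)
    (A : ∀ i : ℕ, Matrix (Fin (n (i + 1))) (Fin (n i)) ℝ)
    (B : ∀ i : ℕ, Matrix (Fin (n (i + 1))) (Fin d) ℝ) (i : ℕ) :
    Matrix (Fin (n i)) (Fin i × Fin d) ℝ :=
  fun s q => (stProd n A i ((q.1 : ℕ) + 1) * B (q.1 : ℕ)) s q.2

lemma exists_factor {m : ℕ} {k : Type*} [Fintype k] (M : Matrix (Fin m) k ℝ) (r' : ℕ)
    (h : r' = M.rank) :
    ∃ (P : Matrix (Fin m) (Fin r') ℝ) (Q : Matrix (Fin r') (Fin m) ℝ),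
      ∀ v ∈ LinearMap.range M.mulVecLin, P *ᵥ (Q *ᵥ v) = v := by
  subst h
  set V := LinearMap.range M.mulVecLin with hV
  have hfr : Module.finrank ℝ V = M.rank := rfl
  let b : Module.Basis (Fin M.rank) ℝ V := Module.finBasisOfFinrankEq ℝ V hfr
  obtain ⟨W, hW⟩ := Submodule.exists_isCompl V
  let proj : (Fin m → ℝ) →ₗ[ℝ] V := Submodule.linearProjOfIsCompl V W hW
  let g : (Fin m → ℝ) →ₗ[ℝ] (Fin M.rank → ℝ) :=
    ((Finsupp.linearEquivFunOnFinite ℝ ℝ (Fin M.rank)).toLinearMap.comp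
      b.repr.toLinearMap).comp proj
  refine ⟨Matrix.of (fun i j => (b j : Fin m → ℝ) i), LinearMap.toMatrix' g, ?_⟩
  intro v hv
  have hQ : (LinearMap.toMatrix' g) *ᵥ v = g v := by
    rw [← Matrix.toLin'_apply, Matrix.toLin'_toMatrix']
  rw [hQ]
  have hproj : proj v = ⟨v, hv⟩ := Submodule.linearProjOfIsCompl_apply_left hW ⟨v, hv⟩
  have hg : g v = fun j => b.repr ⟨v, hv⟩ j := by
    simp [g, hproj]; rfl
  rw [hg]
  have hsum : ∀ c : Fin M.rank → ℝ,
      (Matrix.of (fun i j => (b j : Fin m → ℝ) i)) *ᵥ c = ((∑ j, c j • b j : V) : Fin m → ℝ) := by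
    intro c
    ext i
    simp [Matrix.mulVec, dotProduct, Submodule.coe_sum, Finset.sum_apply, mul_comm]
  rw [hsum]
  rw [show (∑ j, b.repr ⟨v, hv⟩ j • b j) = (⟨v, hv⟩ : V) from b.sum_repr ⟨v, hv⟩]

lemma stProd_self (n : ℕ → ℕ) (A : ∀ i : ℕ, Matrix (Fin (n (i + 1))) (Fin (n i)) ℝ) (i : ℕ) :
    stProd n A i i = 1 := by
  cases i <;> simp [stProd]

lemma stProd_succ (n : ℕ → ℕ) (A : ∀ i : ℕ, Matrix (Fin (n (i + 1))) (Fin (n i)) ℝ)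
    {i j : ℕ} (h : i + 1 ≠ j) : stProd n A (i + 1) j = A i * stProd n A i j := by
  rw [stProd, dif_neg h]

lemma col_mul {a b t : ℕ} (M : Matrix (Fin a) (Fin b) ℝ) (N : Matrix (Fin b) (Fin t) ℝ)
    (c : Fin t) : (fun s => (M * N) s c) = M *ᵥ (fun s => N s c) := by
  ext s; simp [Matrix.mul_apply, Matrix.mulVec, dotProduct]

lemma colMem {a : ℕ} {t : Type*} [Fintype t] [DecidableEq t] (M : Matrix (Fin a) t ℝ) (c : t) :
    (fun s => M s c) ∈ LinearMap.range M.mulVecLin :=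
  ⟨Pi.single c 1, by ext s; simp⟩

lemma mulVec_eq_sum' {a : ℕ} {t : Type*} [Fintype t] (M : Matrix (Fin a) t ℝ) (x : t → ℝ) :
    M *ᵥ x = ∑ j, x j • (fun s => M s j) := by
  ext s; simp [Matrix.mulVec, dotProduct, Finset.sum_apply, mul_comm]

/-- causal state reduction: if `(A, B, C, D)` realizes the causal operator
`T` with controllability matrices `𝒞_i`, then `T` admits a recurrent realization with state
sizes `n' i = rank 𝒞_i` for `1 ≤ i ≤ ℓ - 1` (and `n' 0 = n' ℓ = 0`). -/
theorem causal_state_reduction (d ℓ : ℕ) (hd : 1 ≤ d) (hℓ : 1 ≤ ℓ)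
    (T : ℕ → ℕ → Matrix (Fin d) (Fin d) ℝ) (hT : IsCausal d ℓ T)
    (n : ℕ → ℕ)
    (A : ∀ i : ℕ, Matrix (Fin (n (i + 1))) (Fin (n i)) ℝ)
    (B : ∀ i : ℕ, Matrix (Fin (n (i + 1))) (Fin d) ℝ)
    (C : ∀ i : ℕ, Matrix (Fin d) (Fin (n i)) ℝ)
    (D : ℕ → Matrix (Fin d) (Fin d) ℝ)
    (hreal : IsRealization d ℓ T n A B C D) :
    ∃ (n' : ℕ → ℕ)
      (A' : ∀ i : ℕ, Matrix (Fin (n' (i + 1))) (Fin (n' i)) ℝ)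
      (B' : ∀ i : ℕ, Matrix (Fin (n' (i + 1))) (Fin d) ℝ)
      (C' : ∀ i : ℕ, Matrix (Fin d) (Fin (n' i)) ℝ)
      (D' : ℕ → Matrix (Fin d) (Fin d) ℝ),
      IsRealization d ℓ T n' A' B' C' D' ∧ n' 0 = 0 ∧ n' ℓ = 0 ∧
        ∀ i, 1 ≤ i → i < ℓ → n' i = (Ctrb d n A B i).rank := by
  classical
  set r : ℕ → ℕ := fun i => if i < ℓ then (Ctrb d n A B i).rank else 0 with hr
  have hPQ : ∀ i, ∃ (P : Matrix (Fin (n i)) (Fin (r i)) ℝ)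
      (Q : Matrix (Fin (r i)) (Fin (n i)) ℝ),
      i < ℓ → ∀ v ∈ LinearMap.range (Ctrb d n A B i).mulVecLin, P *ᵥ (Q *ᵥ v) = v := by
    intro i
    by_cases h : i < ℓ
    · obtain ⟨P, Q, hpq⟩ := exists_factor (Ctrb d n A B i) (r i) (by simp [hr, h])
      exact ⟨P, Q, fun _ => hpq⟩
    · exact ⟨0, 0, fun h' => absurd h' h⟩
  choose P Q hPQ using hPQ
  set A' : ∀ i : ℕ, Matrix (Fin (r (i + 1))) (Fin (r i)) ℝ :=
    fun i => Q (i + 1) * A i * P i with hA'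
  set B' : ∀ i : ℕ, Matrix (Fin (r (i + 1))) (Fin d) ℝ := fun i => Q (i + 1) * B i with hB'
  set C' : ∀ i : ℕ, Matrix (Fin d) (Fin (r i)) ℝ := fun i => C i * P i with hC'
  -- columns of Ctrb
  have colC : ∀ (i j : ℕ) (hj : j < i) (c : Fin d),
      (fun s => (stProd n A i (j + 1) * B j) s c)
        ∈ LinearMap.range (Ctrb d n A B i).mulVecLin := fun i j hj c =>
    colMem (Ctrb d n A B i) (⟨j, hj⟩, c)
  have Astep : ∀ i, ∀ v ∈ LinearMap.range (Ctrb d n A B i).mulVecLin,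
      A i *ᵥ v ∈ LinearMap.range (Ctrb d n A B (i + 1)).mulVecLin := by
    rintro i v ⟨x, rfl⟩
    rw [Matrix.mulVecLin_apply]
    have hlin : A i *ᵥ (Ctrb d n A B i *ᵥ x)
        = ∑ q, x q • (A i *ᵥ (fun s => Ctrb d n A B i s q)) := by
      conv_lhs => rw [mulVec_eq_sum' (Ctrb d n A B i) x]
      rw [← Matrix.mulVecLin_apply, map_sum]
      simp only [LinearMap.map_smul, Matrix.mulVecLin_apply]
    rw [hlin]
    refine Submodule.sum_mem _ fun q _ => Submodule.smul_mem _ _ ?_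
    have h2 : A i *ᵥ (fun s => Ctrb d n A B i s q)
        = fun s => (A i * (stProd n A i ((q.1 : ℕ) + 1) * B (q.1 : ℕ))) s q.2 :=
      (col_mul (A i) (stProd n A i ((q.1 : ℕ) + 1) * B (q.1 : ℕ)) q.2).symm
    rw [h2]
    have h3 : A i * (stProd n A i ((q.1 : ℕ) + 1) * B (q.1 : ℕ))
        = stProd n A (i + 1) ((q.1 : ℕ) + 1) * B (q.1 : ℕ) := by
      rw [stProd_succ n A (show i + 1 ≠ (q.1 : ℕ) + 1 by have := q.1.isLt; omega),
        Matrix.mul_assoc]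
    rw [h3]
    exact colMem (Ctrb d n A B (i + 1)) (⟨(q.1 : ℕ), by have := q.1.isLt; omega⟩, q.2)
  have projN : ∀ k, k < ℓ → ∀ {t : ℕ} (N : Matrix (Fin (n k)) (Fin t) ℝ),
      (∀ c, (fun s => N s c) ∈ LinearMap.range (Ctrb d n A B k).mulVecLin) →
      P k * (Q k * N) = N := by
    intro k hk t N hN
    ext s c
    have h1 : (fun s => (P k * (Q k * N)) s c) = P k *ᵥ (Q k *ᵥ (fun s => N s c)) := by
      rw [col_mul, col_mul]
    have h2 := hPQ k hk _ (hN c)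
    calc (P k * (Q k * N)) s c = (P k *ᵥ (Q k *ᵥ (fun s => N s c))) s := congrFun h1 s
      _ = N s c := congrFun h2 s
  have key : ∀ i j, j < i → i < ℓ →
      P i * (stProd r A' i (j + 1) * B' j) = stProd n A i (j + 1) * B j := by
    intro i
    induction i with
    | zero => intro j hj; exact absurd hj (Nat.not_lt_zero j)
    | succ i ih =>
      intro j hj hi
      by_cases hji : j = i
      · subst hji
        rw [stProd_self, Matrix.one_mul, stProd_self, Matrix.one_mul]
        refine projN (j + 1) hi (B j) fun c => ?_
        have : (fun s => B j s c) = fun s => (stProd n A (j + 1) (j + 1) * B j) s c := by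
          rw [stProd_self, Matrix.one_mul]
        rw [this]
        exact colMem (Ctrb d n A B (j + 1)) (⟨j, Nat.lt_succ_self j⟩, c)
      · have hj2 : j < i := by omega
        have hi2 : i < ℓ := by omega
        rw [stProd_succ r A' (by omega : i + 1 ≠ j + 1),
          stProd_succ n A (by omega : i + 1 ≠ j + 1)]
        have ih' := ih j hj2 hi2
        have e1 : (A' i * stProd r A' i (j + 1)) * B' j
            = Q (i + 1) * (A i * (P i * (stProd r A' i (j + 1) * B' j))) := by
          rw [hA']; simp only [Matrix.mul_assoc]
        calc P (i + 1) * ((A' i * stProd r A' i (j + 1)) * B' j)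
            = P (i + 1) * (Q (i + 1) * (A i * (stProd n A i (j + 1) * B j))) := by
              rw [e1, ih']
          _ = A i * (stProd n A i (j + 1) * B j) := by
              refine projN (i + 1) hi _ fun c => ?_
              rw [show (fun s => (A i * (stProd n A i (j + 1) * B j)) s c)
                  = A i *ᵥ (fun s => (stProd n A i (j + 1) * B j) s c) from
                col_mul _ _ c]
              exact Astep i _ (colC i j hj2 c)
          _ = (A i * stProd n A i (j + 1)) * B j := (Matrix.mul_assoc _ _ _).symm
  refine ⟨r, A', B', C', D, ⟨hreal.1, ?_⟩, ?_, ?_, ?_⟩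
  · intro i j hi hj
    rw [hreal.2 i j hi hj]
    have : C i * P i * stProd r A' i (j + 1) * B' j = C i * stProd n A i (j + 1) * B j := by
      calc C i * P i * stProd r A' i (j + 1) * B' j
          = C i * (P i * (stProd r A' i (j + 1) * B' j)) := by simp only [Matrix.mul_assoc]
        _ = C i * (stProd n A i (j + 1) * B j) := by rw [key i j hj hi]
        _ = C i * stProd n A i (j + 1) * B j := (Matrix.mul_assoc _ _ _).symm
    exact this.symm
  · have h0 : (Ctrb d n A B 0).rank = 0 := by
      have := (Ctrb d n A B 0).rank_le_card_width
      simpa using this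
    simp [hr, hℓ, h0]
  · simp [hr]
  · intro i h1 h2
    simp [hr, h2]
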